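/- arXiv:2010.12088 — 2 statements merged into one kernel-verified Lean document; each statement's English description precedes it below -/
import Mathlib

section
/- Let v*_D(x) denote the minimum of z ↦ (1/2)‖x − Dz‖₂² + λ‖z‖₁. Suppose ‖x‖₂ ≤ 1 + ν, ‖D − D'‖₂ ≤ ε (operator norm), and ε(1+ν)²/(2λ) ≤ 1. Then v*_{D'}(x) ≤ v*_D(x) + (5ε/(4λ))(1+ν)², and hence |v*_{D'}(x) − v*_D(x)| ≤ (5ε/(4λ))(1+ν)². -/
open scoped BigOperators
open Finset

noncomputable def l2 {n : ℕ} (x : Fin n → ℝ) : ℝ := Real.sqrt (∑ i, (x i) ^ 2)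

noncomputable def l1 {n : ℕ} (x : Fin n → ℝ) : ℝ := ∑ i, |x i|

noncomputable def inp {n : ℕ} (x y : Fin n → ℝ) : ℝ := ∑ i, x i * y i

/-- The Lasso objective `z ↦ (1/2)‖x − Dz‖₂² + λ‖z‖₁`. -/
noncomputable def lassoObj {d p : ℕ} (D : Matrix (Fin d) (Fin p) ℝ) (lam : ℝ)
    (x : Fin d → ℝ) (z : Fin p → ℝ) : ℝ :=
  (1 / 2) * (l2 (x - D.mulVec z)) ^ 2 + lam * l1 z

lemma l2_nonneg {n : ℕ} (x : Fin n → ℝ) : 0 ≤ l2 x := Real.sqrt_nonneg _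

lemma l2_neg {n : ℕ} (x : Fin n → ℝ) : l2 (-x) = l2 x := by simp [l2]

lemma l2_eq_norm {n : ℕ} (x : Fin n → ℝ) :
    l2 x = ‖(WithLp.equiv 2 (Fin n → ℝ)).symm x‖ := by
  rw [EuclideanSpace.norm_eq]; simp [l2, sq_abs]

lemma l2_triangle {n : ℕ} (a b : Fin n → ℝ) : l2 (a + b) ≤ l2 a + l2 b := by
  simp only [l2_eq_norm]
  exact norm_add_le _ _

lemma l2_le_l1 {n : ℕ} (x : Fin n → ℝ) : l2 x ≤ l1 x := by
  rw [l2, l1]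
  have h : ∑ i, (x i)^2 ≤ (∑ i, |x i|)^2 := by
    calc ∑ i, (x i)^2 = ∑ i, |x i|^2 := by simp [sq_abs]
    _ ≤ (∑ i, |x i|)^2 := Finset.sum_sq_le_sq_sum_of_nonneg (fun i _ => abs_nonneg _)
  calc Real.sqrt (∑ i, (x i)^2) ≤ Real.sqrt ((∑ i, |x i|)^2) := Real.sqrt_le_sqrt h
  _ = ∑ i, |x i| := Real.sqrt_sq (by positivity)

lemma l1_nonneg {n : ℕ} (x : Fin n → ℝ) : 0 ≤ l1 x :=
  Finset.sum_nonneg (fun i _ => abs_nonneg _)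

lemma arith_key (lam ε C a b K : ℝ) (hlam : 0 < lam) (hε0 : 0 ≤ ε) (hC0 : 0 < C)
    (hC2 : C ≤ 2) (ha0 : 0 ≤ a) (haC : a ≤ C) (hb0 : 0 ≤ b)
    (hb2 : 2 * lam * b ≤ ε * C ^ 2) (hεC : ε * C ^ 2 ≤ 2 * lam)
    (hK : 4 * lam * K = 5 * ε * C ^ 2) :
    (1/2) * (a + b)^2 ≤ (1/2) * a^2 + K := by
  have hb1 : b ≤ 1 := by nlinarith
  nlinarith [mul_nonneg (sub_nonneg.2 hb2) ha0, mul_nonneg (sub_nonneg.2 hb2) hb0,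
    mul_nonneg (mul_nonneg hε0 (mul_nonneg hC0.le hC0.le)) (sub_nonneg.2 hC2),
    mul_nonneg (mul_nonneg hε0 hC0.le) (sub_nonneg.2 haC),
    mul_nonneg (sub_nonneg.2 hb1) (sub_nonneg.2 hb2)]

lemma key {d p : ℕ} (D D' : Matrix (Fin d) (Fin p) ℝ) (lam ν ε : ℝ)
    (hlam : 0 < lam) (hν : 0 ≤ ν) (hν1 : ν ≤ 1) (hε0 : 0 ≤ ε)
    (hεsmall : ε * (1 + ν) ^ 2 / (2 * lam) ≤ 1)
    (x : Fin d → ℝ) (hx : l2 x ≤ 1 + ν)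
    (hop : ∀ z : Fin p → ℝ, l2 ((D - D').mulVec z) ≤ ε * l2 z)
    (α : Fin p → ℝ) (hmin : lassoObj D lam x α ≤ lassoObj D lam x 0)
    (α' : Fin p → ℝ) (hmin' : lassoObj D' lam x α' ≤ lassoObj D' lam x α) :
    lassoObj D' lam x α' ≤ lassoObj D lam x α + (5 * ε / (4 * lam)) * (1 + ν) ^ 2 := by
  obtain ⟨C, hCdef⟩ : ∃ C : ℝ, C = 1 + ν := ⟨_, rfl⟩
  rw [← hCdef] at hx hεsmall ⊢
  have hC1 : (1:ℝ) ≤ C := by rw [hCdef]; linarith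
  have hC0 : (0:ℝ) < C := by linarith
  have hC2 : C ≤ 2 := by rw [hCdef]; linarith
  have h0 : lassoObj D lam x 0 = (1/2) * (l2 x)^2 := by
    simp [lassoObj, l1, Matrix.mulVec_zero]
  have hfα : lassoObj D lam x α ≤ C^2 / 2 := by
    have hsq : (l2 x)^2 ≤ C^2 := pow_le_pow_left₀ (l2_nonneg x) hx 2
    calc lassoObj D lam x α ≤ lassoObj D lam x 0 := hmin
    _ = (1/2) * (l2 x)^2 := h0
    _ ≤ C^2 / 2 := by linarith
  set a : ℝ := l2 (x - D.mulVec α) with hadef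
  set b : ℝ := l2 ((D - D').mulVec α) with hbdef
  have ha0 : 0 ≤ a := l2_nonneg _
  have hb0 : 0 ≤ b := l2_nonneg _
  have hl1α : 0 ≤ l1 α := l1_nonneg α
  have hobj : lassoObj D lam x α = (1/2) * a^2 + lam * l1 α := by
    simp only [lassoObj, hadef]
  have hfa2 : (1/2) * a^2 + lam * l1 α ≤ C^2/2 := by rw [← hobj]; exact hfα
  have haC : a ≤ C := by nlinarith [mul_nonneg hlam.le hl1α]
  have hlamL1 : lam * l1 α ≤ C^2 / 2 := by nlinarith
  have hb2 : 2 * lam * b ≤ ε * C^2 := by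
    have h1 : b ≤ ε * l2 α := hop α
    have h2 : l2 α ≤ l1 α := l2_le_l1 α
    have h3 : lam * l2 α ≤ C^2 / 2 := by
      have := mul_le_mul_of_nonneg_left h2 hlam.le
      linarith
    have h4 := mul_le_mul_of_nonneg_left h3 hε0
    have h5 := mul_le_mul_of_nonneg_left h1 (by positivity : (0:ℝ) ≤ 2 * lam)
    nlinarith
  have hεC : ε * C^2 ≤ 2 * lam := by
    rw [div_le_one (by positivity)] at hεsmall
    exact hεsmall
  have hsplit : x - D'.mulVec α = (x - D.mulVec α) + (D - D').mulVec α := by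
    rw [Matrix.sub_mulVec]; abel
  have htri : l2 (x - D'.mulVec α) ≤ a + b := by
    rw [hsplit]; exact l2_triangle _ _
  have hsq : (l2 (x - D'.mulVec α))^2 ≤ (a + b)^2 :=
    pow_le_pow_left₀ (l2_nonneg _) htri 2
  have hK : 4 * lam * ((5 * ε / (4 * lam)) * C^2) = 5 * ε * C^2 := by
    field_simp
  have hstep : (1/2) * (a+b)^2 ≤ (1/2) * a^2 + (5 * ε / (4 * lam)) * C^2 :=
    arith_key lam ε C a b _ hlam hε0 hC0 hC2 ha0 haC hb0 hb2 hεC hK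
  have hobj' : lassoObj D' lam x α = (1/2) * (l2 (x - D'.mulVec α))^2 + lam * l1 α := by
    simp only [lassoObj]
  calc lassoObj D' lam x α' ≤ lassoObj D' lam x α := hmin'
  _ = (1/2) * (l2 (x - D'.mulVec α))^2 + lam * l1 α := hobj'
  _ ≤ (1/2) * (a+b)^2 + lam * l1 α := by linarith [hsq]
  _ ≤ (1/2) * a^2 + lam * l1 α + (5 * ε / (4 * lam)) * C^2 := by linarith
  _ = lassoObj D lam x α + (5 * ε / (4 * lam)) * C^2 := by rw [hobj]

/-- stability of the Lasso optimal value under dictionary perturbations. -/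
theorem stmt5 {d p : ℕ} (D D' : Matrix (Fin d) (Fin p) ℝ) (lam ν ε : ℝ)
    (hlam : 0 < lam) (hν : 0 ≤ ν) (hν1 : ν ≤ 1) (hε0 : 0 ≤ ε)
    (hεsmall : ε * (1 + ν) ^ 2 / (2 * lam) ≤ 1)
    (x : Fin d → ℝ) (hx : l2 x ≤ 1 + ν)
    (hop : ∀ z : Fin p → ℝ, l2 ((D - D').mulVec z) ≤ ε * l2 z)
    (α : Fin p → ℝ) (hmin : ∀ z, lassoObj D lam x α ≤ lassoObj D lam x z)
    (α' : Fin p → ℝ) (hmin' : ∀ z, lassoObj D' lam x α' ≤ lassoObj D' lam x z) :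
    lassoObj D' lam x α' ≤ lassoObj D lam x α + (5 * ε / (4 * lam)) * (1 + ν) ^ 2 ∧
      |lassoObj D' lam x α' - lassoObj D lam x α| ≤ (5 * ε / (4 * lam)) * (1 + ν) ^ 2 := by
  have hop' : ∀ z : Fin p → ℝ, l2 ((D' - D).mulVec z) ≤ ε * l2 z := by
    intro z
    have : (D' - D).mulVec z = -((D - D').mulVec z) := by
      rw [← Matrix.neg_mulVec, neg_sub]
    rw [this, l2_neg]
    exact hop z
  have h1 := key D D' lam ν ε hlam hν hν1 hε0 hεsmall x hx hop α (hmin 0) α' (hmin' α)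
  have h2 := key D' D lam ν ε hlam hν hν1 hε0 hεsmall x hx hop' α' (hmin' 0) α (hmin α')
  refine ⟨h1, abs_sub_le_iff.2 ⟨by linarith, by linarith⟩⟩
end

section
/- Let α = φ_D(x) and α̃ = φ_D(x+v) be Lasso minimizers with the same dictionary D on inputs x and x+v, where ‖v‖₂ ≤ ν. Then ‖Dα − Dα̃‖₂ ≤ ν. -/
open scoped BigOperators
open Finset

lemma l2_sq {n : ℕ} (x : Fin n → ℝ) : l2 x ^ 2 = ∑ i, (x i) ^ 2 := by
  rw [l2, Real.sq_sqrt]; positivity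

lemma lassoObj_eq {d p : ℕ} (D : Matrix (Fin d) (Fin p) ℝ) (lam : ℝ)
    (x : Fin d → ℝ) (z : Fin p → ℝ) :
    lassoObj D lam x z = (1/2) * (∑ i, (x i - D.mulVec z i) ^ 2) + lam * l1 z := by
  rw [lassoObj, l2_sq]
  simp [Pi.sub_apply]

/-- Strong convexity of the quadratic part of the Lasso objective yields: any minimizer α
satisfies F(z) ≥ F(α) + (1/2)‖D(z−α)‖². -/
lemma lasso_strong {d p : ℕ} (D : Matrix (Fin d) (Fin p) ℝ) (lam : ℝ) (hlam : 0 ≤ lam)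
    (x : Fin d → ℝ) (α : Fin p → ℝ)
    (hmin : ∀ z, lassoObj D lam x α ≤ lassoObj D lam x z) (z : Fin p → ℝ) :
    lassoObj D lam x α + (1/2) * ∑ i, (D.mulVec z i - D.mulVec α i) ^ 2
      ≤ lassoObj D lam x z := by
  set a : Fin d → ℝ := D.mulVec α with ha
  set b : Fin d → ℝ := D.mulVec z with hb
  set K : ℝ := ∑ i, (b i - a i) ^ 2 with hKdef
  set c : ℝ := lam * l1 z - lam * l1 α - ∑ i, (x i - a i) * (b i - a i) with hcdef
  have hK0 : 0 ≤ K := by positivity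
  have H : ∀ t : ℝ, 0 < t → t ≤ 1 → 0 ≤ t * c + t ^ 2 / 2 * K := by
    intro t ht ht1
    have h1 := hmin (α + t • (z - α))
    have hDm : ∀ i, D.mulVec (α + t • (z - α)) i = a i + t * (b i - a i) := by
      intro i
      rw [Matrix.mulVec_add, Matrix.mulVec_smul, Matrix.mulVec_sub]
      simp [ha, hb, mul_sub]
    have hl1 : l1 (α + t • (z - α)) ≤ (1 - t) * l1 α + t * l1 z := by
      rw [l1, l1, l1, Finset.mul_sum, Finset.mul_sum, ← Finset.sum_add_distrib]
      apply Finset.sum_le_sum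
      intro i _
      have he : (α + t • (z - α)) i = (1 - t) * α i + t * z i := by
        simp [Pi.add_apply]; ring
      rw [he]
      calc |(1 - t) * α i + t * z i| ≤ |(1 - t) * α i| + |t * z i| := abs_add_le _ _
        _ = (1 - t) * |α i| + t * |z i| := by
            rw [abs_mul, abs_mul, abs_of_nonneg (by linarith), abs_of_nonneg ht.le]
    have hqsum : ∑ i, (x i - D.mulVec (α + t • (z - α)) i) ^ 2
        = ∑ i, (x i - a i) ^ 2 - 2 * t * (∑ i, (x i - a i) * (b i - a i)) + t ^ 2 * K := by
      have hpt : ∀ i, (x i - D.mulVec (α + t • (z - α)) i) ^ 2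
          = (x i - a i) ^ 2 - 2 * t * ((x i - a i) * (b i - a i)) + t ^ 2 * (b i - a i) ^ 2 := by
        intro i; rw [hDm i]; ring
      rw [Finset.sum_congr rfl fun i _ => hpt i, Finset.sum_add_distrib,
        Finset.sum_sub_distrib, ← Finset.mul_sum, ← Finset.mul_sum, hKdef]
    rw [lassoObj_eq, lassoObj_eq, hqsum] at h1
    have := mul_le_mul_of_nonneg_left hl1 hlam
    nlinarith [this, h1]
  -- deduce 0 ≤ c
  have hc0 : 0 ≤ c := by
    by_contra hc
    push_neg at hc
    rcases eq_or_lt_of_le hK0 with hK | hK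
    · have := H 1 one_pos le_rfl
      rw [← hK] at this
      nlinarith
    · set t : ℝ := min 1 (-c / K) with htdef
      have ht0 : 0 < t := lt_min one_pos (div_pos (by linarith) hK)
      have ht1 : t ≤ 1 := min_le_left _ _
      have htK : t * K ≤ -c := by
        have h2 : t ≤ -c / K := min_le_right _ _
        calc t * K ≤ (-c / K) * K := by nlinarith
          _ = -c := by field_simp
      have := H t ht0 ht1
      nlinarith
  -- conclude: F z = F α + c + K/2
  have hfinal : ∑ i, (x i - b i) ^ 2
      = ∑ i, (x i - a i) ^ 2 - 2 * (∑ i, (x i - a i) * (b i - a i)) + K := by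
    have hpt : ∀ i, (x i - b i) ^ 2
        = (x i - a i) ^ 2 - 2 * ((x i - a i) * (b i - a i)) + (b i - a i) ^ 2 := by
      intro i; ring
    rw [Finset.sum_congr rfl fun i _ => hpt i, Finset.sum_add_distrib,
      Finset.sum_sub_distrib, ← Finset.mul_sum, hKdef]
  rw [lassoObj_eq, lassoObj_eq, hfinal]
  rw [hcdef] at hc0
  rw [hKdef]
  linarith

/-- norm stability of the Lasso reconstruction under adversarial
perturbations of the input. -/
theorem stmt8 {d p : ℕ} (D : Matrix (Fin d) (Fin p) ℝ) (lam ν : ℝ)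
    (hlam : 0 < lam) (hν : 0 ≤ ν)
    (x v : Fin d → ℝ) (hv : l2 v ≤ ν)
    (α : Fin p → ℝ) (hmin : ∀ z, lassoObj D lam x α ≤ lassoObj D lam x z)
    (αt : Fin p → ℝ) (hmint : ∀ z, lassoObj D lam (x + v) αt ≤ lassoObj D lam (x + v) z) :
    l2 (D.mulVec α - D.mulVec αt) ≤ ν := by
  set a : Fin d → ℝ := D.mulVec α with ha
  set b : Fin d → ℝ := D.mulVec αt with hb
  have h1 := lasso_strong D lam hlam.le x α hmin αt
  have h2 := lasso_strong D lam hlam.le (x + v) αt hmint α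
  rw [lassoObj_eq, lassoObj_eq] at h1 h2
  -- key inequality : ∑ (b-a)^2 ≤ ∑ v (b-a)
  have hsym : ∑ i, (a i - b i) ^ 2 = ∑ i, (b i - a i) ^ 2 := by
    apply Finset.sum_congr rfl; intro i _; ring
  have hxv : ∀ i, (x + v) i = x i + v i := fun i => rfl
  have hiden : ∑ i, ((x i - b i) ^ 2 + ((x i + v i) - a i) ^ 2
        - (x i - a i) ^ 2 - ((x i + v i) - b i) ^ 2)
      = 2 * ∑ i, v i * (b i - a i) := by
    rw [Finset.mul_sum]
    apply Finset.sum_congr rfl; intro i _; ring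
  have hsplit : ∑ i, ((x i - b i) ^ 2 + ((x i + v i) - a i) ^ 2
        - (x i - a i) ^ 2 - ((x i + v i) - b i) ^ 2)
      = ∑ i, (x i - b i) ^ 2 + ∑ i, ((x i + v i) - a i) ^ 2
        - ∑ i, (x i - a i) ^ 2 - ∑ i, ((x i + v i) - b i) ^ 2 := by
    rw [Finset.sum_sub_distrib, Finset.sum_sub_distrib, Finset.sum_add_distrib]
  simp only [hxv] at h1 h2
  have hkey : ∑ i, (b i - a i) ^ 2 ≤ ∑ i, v i * (b i - a i) := by
    rw [hsym] at h2
    have := hiden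
    rw [hsplit] at this
    linarith
  -- Cauchy–Schwarz
  have hcs : ∑ i, v i * (b i - a i)
      ≤ Real.sqrt (∑ i, (v i) ^ 2) * Real.sqrt (∑ i, (b i - a i) ^ 2) :=
    Real.sum_mul_le_sqrt_mul_sqrt _ _ _
  set L : ℝ := Real.sqrt (∑ i, (b i - a i) ^ 2) with hL
  have hL0 : 0 ≤ L := Real.sqrt_nonneg _
  have hLsq : L ^ 2 = ∑ i, (b i - a i) ^ 2 := Real.sq_sqrt (by positivity)
  have hsum : ∑ i, ((a - b) i) ^ 2 = ∑ i, (b i - a i) ^ 2 :=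
    Finset.sum_congr rfl fun i _ => by simp only [Pi.sub_apply]; ring
  have hgoal : l2 (a - b) = L := by rw [l2, hsum]
  rw [hgoal]
  have hv' : Real.sqrt (∑ i, (v i) ^ 2) ≤ ν := by rw [l2] at hv; exact hv
  have hchain : L ^ 2 ≤ ν * L := by
    calc L ^ 2 = ∑ i, (b i - a i) ^ 2 := hLsq
      _ ≤ ∑ i, v i * (b i - a i) := hkey
      _ ≤ Real.sqrt (∑ i, (v i) ^ 2) * L := hcs
      _ ≤ ν * L := by nlinarith [Real.sqrt_nonneg (∑ i, (v i) ^ 2)]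
  nlinarith
end
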